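/- Global complexity of the gradient method with spectral preconditioning: let f : E → ℝ be twice continuously differentiable with L-Lipschitz-continuous Hessian (L > 0) and bounded below by f* (f(x) ≥ f* for all x). Fix σ̄ ≥ 0 and a sequence of points (x_k)_{k≥0} such that for each k there is a symmetric positive semidefinite linear map H_k with ‖H_k − ∇²f(x_k)‖ ≤ σ̄, the step size is α_k = √(L‖∇f(x_k)‖/2) + σ̄, and the iterate satisfies ∇f(x_k) + (H_k + α_k I)(x_{k+1} − x_k) = 0. Then for every ε with 0 < ε < ‖∇f(x₀)‖, setting K = ⌈8(f(x₀) − f*)·(√(L/2)·ε^{−3/2} + σ̄·ε^{−2}) + 2·ln(‖∇f(x₀)‖/ε)⌉, it holds that min_{1 ≤ i ≤ K} ‖∇f(x_i)‖ ≤ ε. -/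

import Mathlib

set_option maxHeartbeats 1000000
set_option synthInstance.maxHeartbeats 400000

open scoped RealInnerProductSpace
open Real Set

def IsSymmPSD {n : ℕ} (H : EuclideanSpace ℝ (Fin n) →L[ℝ] EuclideanSpace ℝ (Fin n)) : Prop :=
  (∀ u v, ⟪H u, v⟫ = ⟪u, H v⟫) ∧ ∀ u, 0 ≤ ⟪H u, u⟫

noncomputable def hess {n : ℕ} (f : EuclideanSpace ℝ (Fin n) → ℝ)
    (x : EuclideanSpace ℝ (Fin n)) :
    EuclideanSpace ℝ (Fin n) →L[ℝ] EuclideanSpace ℝ (Fin n) :=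
  fderiv ℝ (gradient f) x

/-! ### Auxiliary lemmas -/

/-- The key polynomial inequality behind the one-step estimate. -/
lemma spg_poly_core (s σ x : ℝ) (hs : 0 < s) (hσ : 0 ≤ σ) (hx : 0 ≤ x)
    (hc : (s+σ)*x ≤ 2*s^2) :
    2*s^2*(2*(s+2*σ)*x + x^2 - 2*s^2) ≤ 8*(s+σ)*((s+σ/2)*x^2 - x^3/6) := by
  rcases eq_or_lt_of_le hx with h0 | hx
  · subst h0; nlinarith [sq_nonneg (s^2)]
  · have hx2s : x ≤ 2*s := by nlinarith
    have hp : 72*s^3 - 39*s^2*x + 6*s*x^2 - x^3 ≥ 0 := by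
      nlinarith [sq_nonneg (x - 2*s), mul_pos hs hs]
    nlinarith [sq_nonneg (8*x^2*σ - 8*s^2*x + 12*s*x^2 - (4/3)*x^3),
      mul_nonneg (mul_nonneg hx.le hx.le) (mul_nonneg hx.le hp),
      mul_pos hx hx, mul_pos (mul_pos hx hx) hx]

/-- The purely scalar form of the one-step estimate. -/
lemma spg_step_core (L σ ε g g' s sε r D : ℝ) (hL : 0 < L) (hσ : 0 ≤ σ) (hε : 0 < ε)
    (hg : ε < g) (hg' : ε < g') (hr : 0 ≤ r)
    (hs : s = Real.sqrt (L*g/2)) (hsε : sε = Real.sqrt (L*ε/2))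
    (F1 : (s + σ/2)*r^2 - L/6*r^3 ≤ D)
    (F2 : g' ≤ (s+2*σ)*r + L/2*r^2)
    (F3 : (s+σ)*r^2 ≤ g*r) :
    1 ≤ 8*(sε+σ)/ε^2 * D + 2*(Real.log g - Real.log g') := by
  have hgpos : 0 < g := hε.trans hg
  have hg'pos : 0 < g' := hε.trans hg'
  have hs2 : s^2 = L*g/2 := by rw [hs]; exact Real.sq_sqrt (by positivity)
  have hsε2 : sε^2 = L*ε/2 := by rw [hsε]; exact Real.sq_sqrt (by positivity)
  have hspos : 0 < s := by rw [hs]; exact Real.sqrt_pos.mpr (by positivity)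
  have hsεpos : 0 < sε := by rw [hsε]; exact Real.sqrt_pos.mpr (by positivity)
  have hrpos : 0 < r := by
    rcases eq_or_lt_of_le hr with h0 | h
    · exfalso; rw [← h0] at F2; simp at F2; nlinarith
    · exact h
  have F3' : (s+σ)*r ≤ g := le_of_mul_le_mul_right (by nlinarith [F3]) hrpos
  have hLg : L*g = 2*s^2 := by linarith [hs2]
  have hcon : (s+σ)*(L*r) ≤ 2*s^2 := by
    have := mul_le_mul_of_nonneg_left F3' hL.le
    nlinarith [this]
  have hLr : L*r ≤ 2*s := by
    nlinarith [hcon, mul_nonneg hσ (mul_nonneg hL.le hr), mul_pos hspos hrpos]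
  have hD0 : 0 ≤ D := by
    have h1 : L*r*(r*r) ≤ 2*s*(r*r) := mul_le_mul_of_nonneg_right hLr (mul_nonneg hr hr)
    nlinarith [mul_nonneg hσ (mul_nonneg hr hr), mul_nonneg hspos.le (mul_nonneg hr hr)]
  have hlog : 2 - 2*(g'/g) ≤ 2*(Real.log g - Real.log g') := by
    have h1 : Real.log (g'/g) ≤ g'/g - 1 := Real.log_le_sub_one_of_pos (by positivity)
    have h2 : Real.log (g'/g) = Real.log g' - Real.log g :=
      Real.log_div (ne_of_gt hg'pos) (ne_of_gt hgpos)
    linarith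
  have hmono : ε^2*(s+σ) ≤ g^2*(sε+σ) := by
    have h1 : ε^2*s ≤ g^2*sε := by
      have e1 : ε^2*s = Real.sqrt (ε^4*(L*g/2)) := by
        rw [Real.sqrt_mul (by positivity), hs,
          show (ε^4 : ℝ) = (ε^2)^2 by ring, Real.sqrt_sq (by positivity)]
      have e2 : g^2*sε = Real.sqrt (g^4*(L*ε/2)) := by
        rw [Real.sqrt_mul (by positivity), hsε,
          show (g^4 : ℝ) = (g^2)^2 by ring, Real.sqrt_sq (by positivity)]
      rw [e1, e2]
      apply Real.sqrt_le_sqrt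
      have h3 : ε^3 ≤ g^3 := pow_le_pow_left₀ hε.le hg.le 3
      have h4 : ε^3*(ε*g) ≤ g^3*(ε*g) := mul_le_mul_of_nonneg_right h3 (by positivity)
      have h5 : ε^4*g ≤ g^4*ε := by linarith [h4]
      have h6 := mul_le_mul_of_nonneg_right h5 (by positivity : (0:ℝ) ≤ L/2)
      linarith [h6]
    have hε2g2 : ε^2 ≤ g^2 := by nlinarith
    nlinarith [mul_le_mul_of_nonneg_left hε2g2 hσ, h1]
  have key : g*(2*g' - g) ≤ 8*(s+σ)*D := by
    have hL2 : (0:ℝ) < L^2 := by positivity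
    rw [← mul_le_mul_iff_of_pos_right hL2]
    have hpoly := spg_poly_core s σ (L*r) hspos hσ (by positivity) hcon
    have hg2 : g*(2*g' - g)*L^2 ≤ g*(2*((s+2*σ)*r + L/2*r^2) - g)*L^2 := by
      apply mul_le_mul_of_nonneg_right _ hL2.le
      exact mul_le_mul_of_nonneg_left (by linarith [F2]) hgpos.le
    have e4 : g*(2*((s+2*σ)*r + L/2*r^2) - g)*L^2
        = (L*g)*(2*(s+2*σ)*(L*r) + (L*r)^2 - (L*g)) := by ring
    have e5 : 8*(s+σ)*((s+σ/2)*r^2 - L/6*r^3)*L^2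
        = 8*(s+σ)*((s+σ/2)*(L*r)^2 - (L*r)^3/6) := by ring
    have hD1 : 8*(s+σ)*((s+σ/2)*r^2 - L/6*r^3)*L^2 ≤ 8*(s+σ)*D*L^2 := by
      apply mul_le_mul_of_nonneg_right _ hL2.le
      exact mul_le_mul_of_nonneg_left F1 (by positivity)
    calc g*(2*g' - g)*L^2 ≤ g*(2*((s+2*σ)*r + L/2*r^2) - g)*L^2 := hg2
      _ = 2*s^2*(2*(s+2*σ)*(L*r) + (L*r)^2 - 2*s^2) := by rw [e4, hLg]
      _ ≤ 8*(s+σ)*((s+σ/2)*(L*r)^2 - (L*r)^3/6) := hpoly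
      _ = 8*(s+σ)*((s+σ/2)*r^2 - L/6*r^3)*L^2 := e5.symm
      _ ≤ 8*(s+σ)*D*L^2 := hD1
  have hchain : 2*(g'/g) - 1 ≤ 8*(sε+σ)/ε^2 * D := by
    have e3 : 2*(g'/g) - 1 = (g*(2*g'-g))/g^2 := by field_simp
    have h1 : (g*(2*g'-g))/g^2 ≤ (8*(s+σ)*D)/g^2 :=
      (div_le_div_iff_of_pos_right (by positivity)).mpr key
    have h2 : (8*(s+σ)*D)/g^2 ≤ 8*(sε+σ)/ε^2 * D := by
      rw [show 8*(sε+σ)/ε^2 * D = (8*(sε+σ)*D)/ε^2 by ring,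
        div_le_div_iff₀ (by positivity) (by positivity)]
      nlinarith [mul_le_mul_of_nonneg_right hmono (by linarith : (0:ℝ) ≤ 8*D)]
    linarith [e3 ▸ h1, h2]
  linarith

/-- Mean-value-type bound with a `C·tᵐ` bound on the derivative. -/
lemma spg_norm_sub_le_of_deriv_pow {E : Type*} [NormedAddCommGroup E] [NormedSpace ℝ E]
    {φ φ' : ℝ → E} {C : ℝ} (m : ℕ)
    (hd : ∀ t, HasDerivAt φ (φ' t) t)
    (hb : ∀ t ∈ Icc (0:ℝ) 1, ‖φ' t‖ ≤ C * t ^ m) :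
    ‖φ 1 - φ 0‖ ≤ C / (m + 1) := by
  have key := image_norm_le_of_norm_deriv_right_le_deriv_boundary
    (f := fun t => φ t - φ 0) (a := 0) (b := 1) (f' := φ')
    (by
      apply Continuous.continuousOn
      exact ((continuous_iff_continuousAt.mpr (fun t => (hd t).continuousAt)).sub
        continuous_const))
    (fun t _ => ((hd t).sub_const (φ 0)).hasDerivWithinAt)
    (B := fun t => C / (m+1) * t ^ (m+1)) (B' := fun t => C * t ^ m)
    (by simp)
    (fun t => by
      have h := (hasDerivAt_pow (m+1) t).const_mul (C / (m+1))
      refine h.congr_deriv ?_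
      push_cast
      field_simp)
    (fun t ht => hb t (Ico_subset_Icc_self ht))
  have := key (right_mem_Icc.mpr zero_le_one)
  simpa using this

section CalcLemmas

variable {n : ℕ} {f : EuclideanSpace ℝ (Fin n) → ℝ} {L : ℝ}

lemma spg_grad_contDiff (hf : ContDiff ℝ 2 f) : ContDiff ℝ 1 (gradient f) := by
  have h1 : ContDiff ℝ 1 (fderiv ℝ f) := hf.fderiv_right (by norm_num)
  exact (InnerProductSpace.toDual ℝ (EuclideanSpace ℝ (Fin n))).symm.contDiff.comp h1

lemma spg_hasFDerivAt_grad (hf : ContDiff ℝ 2 f) (z : EuclideanSpace ℝ (Fin n)) :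
    HasFDerivAt (gradient f) (hess f z) z :=
  (((spg_grad_contDiff hf).differentiable one_ne_zero) z).hasFDerivAt

lemma spg_hasGradAt (hf : ContDiff ℝ 2 f) (z : EuclideanSpace ℝ (Fin n)) :
    HasGradientAt f (gradient f z) z :=
  ((hf.differentiable (by norm_num)) z).hasGradientAt

lemma spg_line_deriv_grad (hf : ContDiff ℝ 2 f) (x h : EuclideanSpace ℝ (Fin n)) (t : ℝ) :
    HasDerivAt (fun τ : ℝ => gradient f (x + τ • h)) (hess f (x + t • h) h) t := by
  have hline : HasDerivAt (fun τ : ℝ => x + τ • h) h t := by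
    simpa using ((hasDerivAt_id t).smul_const h).const_add x
  exact (spg_hasFDerivAt_grad hf (x + t • h)).comp_hasDerivAt t hline

lemma spg_line_deriv_f (hf : ContDiff ℝ 2 f) (x h : EuclideanSpace ℝ (Fin n)) (t : ℝ) :
    HasDerivAt (fun τ : ℝ => f (x + τ • h)) ⟪gradient f (x + t • h), h⟫ t := by
  have hline : HasDerivAt (fun τ : ℝ => x + τ • h) h t := by
    simpa using ((hasDerivAt_id t).smul_const h).const_add x
  simpa [Function.comp_def] using
    ((spg_hasGradAt hf (x + t • h)).hasFDerivAt).comp_hasDerivAt t hline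

/-- Lipschitz Hessian: first-order approximation of the gradient. -/
lemma spg_grad_approx (hf : ContDiff ℝ 2 f)
    (hLip : ∀ x y, ‖hess f x - hess f y‖ ≤ L * ‖x - y‖)
    (x h : EuclideanSpace ℝ (Fin n)) :
    ‖gradient f (x + h) - gradient f x - hess f x h‖ ≤ L / 2 * ‖h‖ ^ 2 := by
  have key := spg_norm_sub_le_of_deriv_pow (C := L * ‖h‖^2) 1
    (φ := fun t : ℝ => gradient f (x + t • h) - t • (hess f x h))
    (φ' := fun t : ℝ => hess f (x + t • h) h - hess f x h)
    (fun t => by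
      have h2 : HasDerivAt (fun τ : ℝ => τ • (hess f x h)) (hess f x h) t := by
        simpa using (hasDerivAt_id t).smul_const (hess f x h)
      exact (spg_line_deriv_grad hf x h t).sub h2)
    (fun t ht => by
      have h1 : ‖hess f (x + t • h) h - hess f x h‖
          ≤ ‖hess f (x + t • h) - hess f x‖ * ‖h‖ := by
        rw [show hess f (x + t • h) h - hess f x h = (hess f (x + t • h) - hess f x) h from
          (ContinuousLinearMap.sub_apply _ _ _).symm]
        exact (hess f (x + t • h) - hess f x).le_opNorm h
      have h2 : ‖hess f (x + t • h) - hess f x‖ ≤ L * (t * ‖h‖) := by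
        have := hLip (x + t • h) x
        simpa [norm_smul, abs_of_nonneg ht.1] using this
      calc ‖hess f (x + t • h) h - hess f x h‖ ≤ L * (t * ‖h‖) * ‖h‖ :=
            h1.trans (mul_le_mul_of_nonneg_right h2 (norm_nonneg h))
        _ = L * ‖h‖^2 * t^1 := by ring)
  have e1 : (fun t : ℝ => gradient f (x + t • h) - t • (hess f x h)) 1
      - (fun t : ℝ => gradient f (x + t • h) - t • (hess f x h)) 0
      = gradient f (x + h) - gradient f x - hess f x h := by
    simp only [one_smul, zero_smul, sub_zero]
    rw [add_zero]
    exact sub_right_comm _ _ _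
  rw [e1] at key
  push_cast at key
  linarith [key]

/-- Lipschitz Hessian: second-order upper Taylor model. -/
lemma spg_f_taylor (hf : ContDiff ℝ 2 f)
    (hLip : ∀ x y, ‖hess f x - hess f y‖ ≤ L * ‖x - y‖)
    (x h : EuclideanSpace ℝ (Fin n)) :
    f (x + h) ≤ f x + ⟪gradient f x, h⟫ + 1/2 * ⟪hess f x h, h⟫ + L/6 * ‖h‖^3 := by
  have key := spg_norm_sub_le_of_deriv_pow (C := L/2 * ‖h‖^3) 2
    (φ := fun t : ℝ => f (x + t • h) - t * ⟪gradient f x, h⟫ - t^2/2 * ⟪hess f x h, h⟫)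
    (φ' := fun t : ℝ => ⟪gradient f (x + t • h) - gradient f x - t • (hess f x h), h⟫)
    (fun t => by
      have h1 : HasDerivAt (fun τ : ℝ => τ * ⟪gradient f x, h⟫) ⟪gradient f x, h⟫ t := by
        simpa using (hasDerivAt_id t).mul_const ⟪gradient f x, h⟫
      have h2 : HasDerivAt (fun τ : ℝ => τ^2/2 * ⟪hess f x h, h⟫) (t * ⟪hess f x h, h⟫) t := by
        have := ((hasDerivAt_pow 2 t).div_const 2).mul_const ⟪hess f x h, h⟫
        refine this.congr_deriv ?_
        push_cast; norm_num
      have h3 := ((spg_line_deriv_f hf x h t).sub h1).sub h2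
      refine h3.congr_deriv ?_
      simp only [inner_sub_left, real_inner_smul_left])
    (fun t ht => by
      have h1 := spg_grad_approx hf hLip x (t • h)
      have h2 : ‖gradient f (x + t • h) - gradient f x - t • (hess f x h)‖
          ≤ L/2 * (t * ‖h‖)^2 := by
        have e2 : hess f x (t • h) = t • (hess f x h) := by simp [map_smul]
        rw [← e2]
        simpa [norm_smul, abs_of_nonneg ht.1] using h1
      calc |⟪gradient f (x + t • h) - gradient f x - t • (hess f x h), h⟫|
          ≤ ‖gradient f (x + t • h) - gradient f x - t • (hess f x h)‖ * ‖h‖ :=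
            abs_real_inner_le_norm _ _
        _ ≤ L/2 * (t * ‖h‖)^2 * ‖h‖ := mul_le_mul_of_nonneg_right h2 (norm_nonneg h)
        _ = L/2 * ‖h‖^3 * t^2 := by ring)
  have e1 : (fun t : ℝ => f (x + t • h) - t * ⟪gradient f x, h⟫ - t^2/2 * ⟪hess f x h, h⟫) 1
      - (fun t : ℝ => f (x + t • h) - t * ⟪gradient f x, h⟫ - t^2/2 * ⟪hess f x h, h⟫) 0
      = f (x + h) - ⟪gradient f x, h⟫ - 1/2 * ⟪hess f x h, h⟫ - f x := by
    simp only [one_smul, zero_smul, add_zero]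
    ring
  rw [e1, Real.norm_eq_abs] at key
  push_cast at key
  have h2 := (abs_le.mp key).2
  linarith [h2]

/-- The one-step estimate of the spectrally preconditioned gradient method. -/
lemma spg_one_step (hf : ContDiff ℝ 2 f) (hL : 0 < L)
    (hLip : ∀ x y, ‖hess f x - hess f y‖ ≤ L * ‖x - y‖)
    {σbar : ℝ} (hσ : 0 ≤ σbar)
    (a b : EuclideanSpace ℝ (Fin n))
    (Hk : EuclideanSpace ℝ (Fin n) →L[ℝ] EuclideanSpace ℝ (Fin n))
    (hPSD : ∀ u, (0:ℝ) ≤ ⟪Hk u, u⟫)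
    (hHerr : ‖Hk - hess f a‖ ≤ σbar)
    {αk : ℝ} (hαk : αk = Real.sqrt (L * ‖gradient f a‖ / 2) + σbar)
    (hstep : gradient f a + Hk (b - a) + αk • (b - a) = 0)
    {ε : ℝ} (hε : 0 < ε) (hga : ε < ‖gradient f a‖) (hgb : ε < ‖gradient f b‖) :
    1 ≤ 8*(Real.sqrt (L*ε/2)+σbar)/ε^2 * (f a - f b)
      + 2*(Real.log ‖gradient f a‖ - Real.log ‖gradient f b‖) := by
  set h : EuclideanSpace ℝ (Fin n) := b - a with hh
  set g : ℝ := ‖gradient f a‖ with hg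
  set s : ℝ := Real.sqrt (L * g / 2) with hs
  set r : ℝ := ‖h‖ with hr
  have hgpos : 0 < g := hε.trans hga
  have hspos : 0 < s := Real.sqrt_pos.mpr (by positivity)
  have hαnn : 0 ≤ αk := by rw [hαk]; positivity
  have hab : a + h = b := by rw [hh]; abel
  have heq : gradient f a = -(Hk h) - αk • h := by
    have h0 := hstep
    rw [add_assoc] at h0
    rw [eq_neg_of_add_eq_zero_left h0]
    abel
  have hinner : ⟪gradient f a, h⟫ = -⟪Hk h, h⟫ - αk * r^2 := by
    rw [heq, inner_sub_left, inner_neg_left, real_inner_smul_left,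
      real_inner_self_eq_norm_sq]
  have hPSDh := hPSD h
  have F3 : (s + σbar) * r^2 ≤ g * r := by
    have h1 : αk * r^2 ≤ -⟪gradient f a, h⟫ := by rw [hinner]; linarith
    have h2 : -⟪gradient f a, h⟫ ≤ g * r := by
      have := abs_real_inner_le_norm (gradient f a) h
      have := neg_abs_le ⟪gradient f a, h⟫
      linarith
    rw [hαk] at h1
    linarith
  have hop : ∀ u : EuclideanSpace ℝ (Fin n), ‖hess f a u - Hk u‖ ≤ σbar * ‖u‖ := by
    intro u
    have h1 : hess f a u - Hk u = (hess f a - Hk) u := by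
      rw [ContinuousLinearMap.sub_apply]
    rw [h1]
    calc ‖(hess f a - Hk) u‖ ≤ ‖hess f a - Hk‖ * ‖u‖ := (hess f a - Hk).le_opNorm u
      _ ≤ σbar * ‖u‖ := by
          apply mul_le_mul_of_nonneg_right _ (norm_nonneg u)
          rw [← norm_neg]
          simpa using hHerr
  have F1 : (s + σbar/2) * r^2 - L/6 * r^3 ≤ f a - f b := by
    have ht := spg_f_taylor hf hLip a h
    rw [hab] at ht
    have hHd : ⟪hess f a h, h⟫ ≤ ⟪Hk h, h⟫ + σbar * r^2 := by
      have h1 : ⟪hess f a h - Hk h, h⟫ ≤ σbar * r^2 := by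
        calc ⟪hess f a h - Hk h, h⟫ ≤ |⟪hess f a h - Hk h, h⟫| := le_abs_self _
          _ ≤ ‖hess f a h - Hk h‖ * ‖h‖ := abs_real_inner_le_norm _ _
          _ ≤ σbar * ‖h‖ * ‖h‖ := mul_le_mul_of_nonneg_right (hop h) (norm_nonneg h)
          _ = σbar * r^2 := by rw [← hr]; ring
      rw [inner_sub_left] at h1
      linarith
    rw [hαk] at hinner
    nlinarith [ht, hHd, hinner, hPSDh]
  have F2 : ‖gradient f b‖ ≤ (s + 2*σbar) * r + L/2 * r^2 := by
    have happ := spg_grad_approx hf hLip a h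
    rw [hab] at happ
    have hdecomp : gradient f b
        = (gradient f b - gradient f a - hess f a h) + (hess f a h - Hk h) - αk • h := by
      rw [heq]; abel
    have tri : ∀ X Y Z : EuclideanSpace ℝ (Fin n), ‖X + Y - Z‖ ≤ ‖X‖ + ‖Y‖ + ‖Z‖ := by
      intro X Y Z
      calc ‖X + Y - Z‖ ≤ ‖X + Y‖ + ‖Z‖ := norm_sub_le _ _
        _ ≤ ‖X‖ + ‖Y‖ + ‖Z‖ := by linarith [norm_add_le X Y]
    have h3 : ‖αk • h‖ = αk * r := by rw [norm_smul, Real.norm_eq_abs, abs_of_nonneg hαnn]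
    have h5 : ‖gradient f b‖
        = ‖(gradient f b - gradient f a - hess f a h) + (hess f a h - Hk h) - αk • h‖ := by
      rw [← hdecomp]
    calc ‖gradient f b‖
        ≤ ‖gradient f b - gradient f a - hess f a h‖ + ‖hess f a h - Hk h‖ + ‖αk • h‖ := by
          rw [h5]; exact tri _ _ _
      _ ≤ L/2 * r^2 + σbar * r + αk * r := by
          have h4 := hop h
          rw [h3]
          exact add_le_add (add_le_add happ (by simpa using h4)) le_rfl
      _ = (s + 2*σbar) * r + L/2 * r^2 := by rw [hαk]; ring
  exact spg_step_core L σbar ε g ‖gradient f b‖ s (Real.sqrt (L*ε/2)) r (f a - f b)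
    hL hσ hε hga hgb (norm_nonneg h) hs rfl F1 F2 F3

end CalcLemmas

/-- Global complexity of the gradient method with spectral preconditioning:
with PSD preconditioners satisfying `‖H_k − ∇²f(x_k)‖ ≤ σ̄`, the step-size rule
`α_k = √(L‖∇f(x_k)‖/2) + σ̄`, and the iteration
`∇f(x_k) + (H_k + α_k I)(x_{k+1} − x_k) = 0`, after
`K = ⌈8(f(x₀) − f*)(√(L/2)/ε^{3/2} + σ̄/ε²) + 2 ln(‖∇f(x₀)‖/ε)⌉` steps
one of the iterates `x_1, …, x_K` has gradient norm at most `ε`. -/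
theorem spectral_preconditioning_global_complexity {n : ℕ}
    (f : EuclideanSpace ℝ (Fin n) → ℝ) (hf : ContDiff ℝ 2 f)
    (L : ℝ) (hL : 0 < L)
    (hLip : ∀ x y, ‖hess f x - hess f y‖ ≤ L * ‖x - y‖)
    (fstar : ℝ) (hbdd : ∀ z, fstar ≤ f z)
    (σbar : ℝ) (hσ : 0 ≤ σbar)
    (x : ℕ → EuclideanSpace ℝ (Fin n))
    (H : ℕ → EuclideanSpace ℝ (Fin n) →L[ℝ] EuclideanSpace ℝ (Fin n))
    (hH : ∀ k, IsSymmPSD (H k))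
    (hHerr : ∀ k, ‖H k - hess f (x k)‖ ≤ σbar)
    (α : ℕ → ℝ)
    (hα : ∀ k, α k = Real.sqrt (L * ‖gradient f (x k)‖ / 2) + σbar)
    (hstep : ∀ k, gradient f (x k) + (H k) (x (k + 1) - x k)
      + α k • (x (k + 1) - x k) = 0)
    (ε : ℝ) (hε : 0 < ε) (hε' : ε < ‖gradient f (x 0)‖)
    (K : ℕ)
    (hK : K = ⌈8 * (f (x 0) - fstar) *
        (Real.sqrt (L / 2) / ε ^ ((3 : ℝ) / 2) + σbar / ε ^ 2)
      + 2 * Real.log (‖gradient f (x 0)‖ / ε)⌉₊) :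
    ∃ i, 1 ≤ i ∧ i ≤ K ∧ ‖gradient f (x i)‖ ≤ ε := by
  by_contra hcon
  push_neg at hcon
  have hgK : ∀ i, i ≤ K → ε < ‖gradient f (x i)‖ := by
    intro i hi
    rcases Nat.eq_zero_or_pos i with h0 | h1
    · rw [h0]; exact hε'
    · exact hcon i h1 hi
  set sε : ℝ := Real.sqrt (L*ε/2) with hsε
  set c : ℝ := 8*(sε+σbar)/ε^2 with hc
  have hsεnn : 0 ≤ sε := Real.sqrt_nonneg _
  have hcnn : 0 ≤ c := by positivity
  have hstep1 : ∀ k, k < K → (1:ℝ) ≤ c*(f (x k) - f (x (k+1)))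
      + 2*(Real.log ‖gradient f (x k)‖ - Real.log ‖gradient f (x (k+1))‖) :=
    fun k hk => spg_one_step hf hL hLip hσ (x k) (x (k+1)) (H k) (hH k).2 (hHerr k)
      (hα k) (hstep k) hε (hgK k hk.le) (hgK (k+1) hk)
  have main : ∀ m, m ≤ K → (m:ℝ) ≤ c*(f (x 0) - f (x m))
      + 2*(Real.log ‖gradient f (x 0)‖ - Real.log ‖gradient f (x m)‖) := by
    intro m
    induction m with
    | zero => intro _; simp
    | succ k ih =>
      intro hk
      have hkK : k < K := Nat.lt_of_succ_le hk
      have h1 := ih hkK.le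
      have h2 := hstep1 k hkK
      push_cast
      push_cast at h1
      linarith
  have hKK := main K le_rfl
  have hΔ : f (x 0) - f (x K) ≤ f (x 0) - fstar := by linarith [hbdd (x K)]
  have hlogK : Real.log ε < Real.log ‖gradient f (x K)‖ :=
    Real.log_lt_log hε (hgK K le_rfl)
  -- rewrite the constant in the statement of `K`
  have hsqε : Real.sqrt ε * Real.sqrt ε = ε := Real.mul_self_sqrt hε.le
  have h32 : ε^((3:ℝ)/2) = ε * Real.sqrt ε := by
    rw [show (3:ℝ)/2 = 1 + (1:ℝ)/2 by norm_num, Real.rpow_add hε, Real.rpow_one,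
      ← Real.sqrt_eq_rpow]
  have hsεeq : sε = Real.sqrt (L/2) * Real.sqrt ε := by
    rw [hsε, show L*ε/2 = (L/2)*ε by ring, Real.sqrt_mul (by positivity)]
  have e1 : Real.sqrt (L/2) / ε^((3:ℝ)/2) = sε/ε^2 := by
    rw [hsεeq, h32, div_eq_div_iff (by positivity) (by positivity)]
    linear_combination (-(Real.sqrt (L/2)) * ε) * hsqε
  have e2 : Real.log (‖gradient f (x 0)‖/ε)
      = Real.log ‖gradient f (x 0)‖ - Real.log ε :=
    Real.log_div (ne_of_gt (hε.trans hε')) (ne_of_gt hε)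
  have hv : (K:ℝ) < 8 * (f (x 0) - fstar) *
      (Real.sqrt (L / 2) / ε ^ ((3 : ℝ) / 2) + σbar / ε ^ 2)
      + 2 * Real.log (‖gradient f (x 0)‖ / ε) := by
    rw [e1, e2, ← add_div]
    have h3 : c*(f (x 0) - f (x K)) ≤ c*(f (x 0) - fstar) :=
      mul_le_mul_of_nonneg_left hΔ hcnn
    have h4 : c*(f (x 0) - fstar) = 8 * (f (x 0) - fstar) * ((sε+σbar)/ε^2) := by
      rw [hc]; ring
    linarith [hKK, h3, hlogK]
  have hle : 8 * (f (x 0) - fstar) *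
      (Real.sqrt (L / 2) / ε ^ ((3 : ℝ) / 2) + σbar / ε ^ 2)
      + 2 * Real.log (‖gradient f (x 0)‖ / ε) ≤ (K:ℝ) := by
    rw [hK]; exact Nat.le_ceil _
  linarith
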